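/- Let 0 ≤ l < k ≤ n and let λ = (λ_1, …, λ_n) ∈ Γ_k with λ_1 < 0. Then σ_{k−1}(λ|1)σ_l(λ) − σ_k(λ)σ_{l−1}(λ|1) ≥ (n/k)·((k−l)/(n−l))·σ_{k−1}(λ)σ_l(λ). (Inequality chain (2.9) in the proof of Lemma 2.5.) -/

import Mathlib

open Finset

noncomputable def esymm {n : ℕ} (lam : Fin n → ℝ) (m : ℤ) : ℝ :=
  if m < 0 then 0
  else ∑ s ∈ Finset.powersetCard m.toNat Finset.univ, ∏ i ∈ s, lam i

noncomputable def esymmDel {n : ℕ} (lam : Fin n → ℝ) (i : Fin n) (m : ℤ) : ℝ :=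
  if m < 0 then 0
  else ∑ s ∈ Finset.powersetCard m.toNat (Finset.univ.erase i), ∏ j ∈ s, lam j

noncomputable def esymmDelSet {n : ℕ} (lam : Fin n → ℝ) (S : Finset (Fin n)) (m : ℤ) : ℝ :=
  if m < 0 then 0
  else ∑ s ∈ Finset.powersetCard m.toNat (Finset.univ \ S), ∏ j ∈ s, lam j

def GardingCone (n k : ℕ) : Set (Fin n → ℝ) :=
  {lam | ∀ m : ℕ, 1 ≤ m → m ≤ k → 0 < esymm lam (m : ℤ)}

noncomputable def sigmaMat {n : ℕ} (A : Matrix (Fin n) (Fin n) ℝ) (m : ℤ) : ℝ :=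
  if m < 0 then 0
  else ∑ s ∈ Finset.powersetCard m.toNat (Finset.univ : Finset (Fin n)),
    (A.submatrix (fun i : {x : Fin n // x ∈ s} => (i : Fin n))
                 (fun j : {x : Fin n // x ∈ s} => (j : Fin n))).det


namespace NewtonAux
open Polynomial

/-- esymm cons recurrence -/
lemma esymm_cons (a : ℝ) (s : Multiset ℝ) (m : ℕ) :
    (a ::ₘ s).esymm (m+1) = s.esymm (m+1) + a * s.esymm m := by
  simp [Multiset.esymm, Multiset.powersetCard_cons, Multiset.map_map, Function.comp_def,
    Multiset.sum_map_mul_left]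

lemma esymm_zero' (s : Multiset ℝ) : s.esymm 0 = 1 := by
  simp [Multiset.esymm]

lemma esymm_of_card_lt {s : Multiset ℝ} {m : ℕ} (h : Multiset.card s < m) : s.esymm m = 0 := by
  obtain ⟨i, hi, rfl⟩ : ∃ i, 0 < i ∧ m = Multiset.card s + i := ⟨m - Multiset.card s, by omega, by omega⟩
  rw [Multiset.esymm, Multiset.powersetCard_card_add s hi]
  simp


lemma deriv_multiset (s : Multiset ℝ) (hn : 1 ≤ Multiset.card s) :
    ∃ t : Multiset ℝ, Multiset.card t = Multiset.card s - 1 ∧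
      ∀ m : ℕ, m ≤ Multiset.card s - 1 →
        ((Multiset.card s - m : ℕ) : ℝ) * s.esymm m = (Multiset.card s : ℝ) * t.esymm m := by
  classical
  set n := Multiset.card s with hns
  set Q : ℝ[X] := (s.map fun a => X + C a).prod with hQ
  have hmonic : Q.Monic :=
    Polynomial.monic_multiset_prod_of_monic s _ (fun a _ => monic_X_add_C a)
  have hdeg : Q.natDegree = n := by
    rw [hQ, Polynomial.natDegree_multiset_prod_of_monic]
    · simp [Multiset.map_map, Function.comp_def, natDegree_X_add_C, hns]
    · intro a ha
      rw [Multiset.mem_map] at ha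
      obtain ⟨b, _, rfl⟩ := ha
      exact monic_X_add_C b
      
  have hQalt : Q = ((s.map fun a => -a).map fun a => X - C a).prod := by
    rw [hQ, Multiset.map_map]
    congr 1
    apply Multiset.map_congr rfl
    intro a _
    simp [sub_neg_eq_add]
  have hroots : Q.roots = s.map fun a => -a := by
    rw [hQalt, Polynomial.roots_multiset_prod_X_sub_C]
  have hcardroots : Multiset.card Q.roots = n := by rw [hroots, Multiset.card_map]
  set Q' := derivative Q with hQ'
  have hcard1 : Multiset.card Q'.roots ≤ Q'.natDegree := Polynomial.card_roots' Q'
  have hcard2 : Q'.natDegree ≤ n - 1 := by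
    have := Polynomial.natDegree_derivative_le Q; rw [hdeg] at this; exact this
  have hcard3 : n ≤ Multiset.card Q'.roots + 1 := by
    rw [← hcardroots]; exact Polynomial.card_roots_le_derivative Q
  have hcardQ' : Multiset.card Q'.roots = n - 1 := by omega
  have hdegQ' : Q'.natDegree = n - 1 := by omega
  have hsplits : Splits Q' := by
    rw [Polynomial.splits_iff_card_roots, hcardQ', hdegQ']
  have hlead : Q'.leadingCoeff = n := by
    rw [Polynomial.leadingCoeff, hdegQ', hQ', Polynomial.coeff_derivative]
    have h1 : n - 1 + 1 = n := by omega
    rw [h1]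
    rw [show Q.coeff n = 1 by rw [← hdeg]; exact hmonic.coeff_natDegree]
    rw [Nat.cast_sub hn]
    push_cast
    ring
  refine ⟨Q'.roots.map (fun a => -a), by rw [Multiset.card_map, hcardQ'], ?_⟩
  intro m hm
  set t := Q'.roots.map (fun a => -a) with ht
  have hcardt : Multiset.card t = n - 1 := by rw [ht, Multiset.card_map, hcardQ']
  have hQ'eq : Q' = C (n : ℝ) * (t.map fun a => X + C a).prod := by
    have h2 := hsplits.eq_prod_roots
    rw [hlead] at h2
    rw [h2]
    congr 1
    rw [ht, Multiset.map_map]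
    congr 1
    apply Multiset.map_congr rfl
    intro a _
    simp [sub_eq_add_neg]
  set j := n - 1 - m with hj
  have hj1 : j + 1 = n - m := by omega
  have hcoeff1 : Q'.coeff j = s.esymm m * ((j : ℝ) + 1) := by
    rw [hQ', Polynomial.coeff_derivative]
    congr 1
    have := Multiset.prod_X_add_C_coeff s (show j + 1 ≤ Multiset.card s by omega)
    rw [← hns] at this
    rw [hQ, this]
    congr 1
    omega
  have hcoeff2 : Q'.coeff j = (n : ℝ) * t.esymm m := by
    rw [hQ'eq, Polynomial.coeff_C_mul]
    congr 1
    have := Multiset.prod_X_add_C_coeff t (show j ≤ Multiset.card t by omega)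
    rw [hcardt] at this
    rw [this]
    congr 1
    omega
  have : s.esymm m * ((j : ℝ) + 1) = (n : ℝ) * t.esymm m := by rw [← hcoeff1, hcoeff2]
  rw [show ((n - m : ℕ) : ℝ) = (j : ℝ) + 1 by rw [← hj1]; push_cast; ring]
  linarith [this]


lemma pair_filter_card {n : ℕ} (a b : Fin n) (hab : a ≠ b) (S : Finset (Fin n))
    (hS : Finset.univ \ S = {a, b}) :
    (Finset.univ.offDiag.filter
      (fun p : Fin n × Fin n => (Finset.univ.erase p.1).erase p.2 = S)) = {(a,b), (b,a)} := by
  have hSmem : ∀ z, z ∈ S ↔ ¬(z = a ∨ z = b) := by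
    intro z
    have h1 := Finset.ext_iff.mp hS z
    simp only [Finset.mem_sdiff, Finset.mem_univ, true_and, Finset.mem_insert,
      Finset.mem_singleton] at h1
    tauto
  have hcond : ∀ x y : Fin n, ((Finset.univ.erase x).erase y = S ↔
      ∀ z, (z = y ∨ z = x) ↔ (z = a ∨ z = b)) := by
    intro x y
    rw [Finset.ext_iff]
    have h2 : ∀ z, (z ∈ (Finset.univ.erase x).erase y ↔ z ∈ S) ↔
        ((z = y ∨ z = x) ↔ (z = a ∨ z = b)) := by
      intro z
      rw [hSmem z]
      simp only [Finset.mem_erase, Finset.mem_univ, and_true]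
      constructor
      · intro h
        constructor
        · intro h3
          by_contra h4
          rcases h.mpr h4 with ⟨n1, n2⟩
          rcases h3 with h3 | h3
          · exact n1 h3
          · exact n2 h3
        · intro h3
          by_contra h4
          push_neg at h4
          exact (h.mp ⟨h4.1, h4.2⟩) h3
      · intro h
        constructor
        · rintro ⟨n1, n2⟩ h3
          rcases h.mpr h3 with h5 | h5
          · exact n1 h5
          · exact n2 h5
        · intro h3
          exact ⟨fun h5 => h3 (h.mp (Or.inl h5)), fun h5 => h3 (h.mp (Or.inr h5))⟩
    exact forall_congr' h2
  ext ⟨x, y⟩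
  simp only [Finset.mem_filter, Finset.mem_offDiag, Finset.mem_univ, true_and,
    Finset.mem_insert, Finset.mem_singleton, Prod.mk.injEq, hcond]
  constructor
  · rintro ⟨hxy, h⟩
    have hx : x = a ∨ x = b := (h x).mp (Or.inr rfl)
    have hy : y = a ∨ y = b := (h y).mp (Or.inl rfl)
    rcases hx with rfl | rfl
    · left
      refine ⟨rfl, ?_⟩
      rcases hy with rfl | rfl
      · exact absurd rfl hxy
      · rfl
    · right
      refine ⟨rfl, ?_⟩
      rcases hy with rfl | rfl
      · rfl
      · exact absurd rfl hxy
  · rintro (⟨rfl, rfl⟩ | ⟨rfl, rfl⟩)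
    · exact ⟨hab, fun z => or_comm⟩
    · exact ⟨hab.symm, fun z => Iff.rfl⟩


lemma newton_top (n : ℕ) (hn : 2 ≤ n) (f : Fin n → ℝ) :
    2 * (n : ℝ) * ((∑ s ∈ powersetCard (n-2) univ, ∏ i ∈ s, f i) *
        (∑ s ∈ powersetCard n univ, ∏ i ∈ s, f i))
      ≤ ((n : ℝ) - 1) * (∑ s ∈ powersetCard (n-1) univ, ∏ i ∈ s, f i)^2 := by
  classical
  set P : Fin n → ℝ := fun i => ∏ j ∈ univ.erase i, f j with hP
  have hcardu : (univ : Finset (Fin n)).card = n := by simp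
  have hEn : (∑ s ∈ powersetCard n univ, ∏ i ∈ s, f i) = ∏ i, f i := by
    rw [show powersetCard n (univ : Finset (Fin n)) = {univ} by
      have h5 := powersetCard_self (univ : Finset (Fin n))
      rwa [hcardu] at h5]
    rw [Finset.sum_singleton]
  have hE1 : (∑ s ∈ powersetCard (n-1) univ, ∏ i ∈ s, f i) = ∑ i, P i := by
    symm
    apply Finset.sum_bij (fun (i : Fin n) (_ : i ∈ univ) => univ.erase i)
    · intro a _
      rw [mem_powersetCard]
      exact ⟨Finset.subset_univ _, by rw [Finset.card_erase_of_mem (mem_univ a), hcardu]⟩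
    · intro a _ b _ h
      by_contra hab
      have : a ∈ univ.erase b := Finset.mem_erase.mpr ⟨hab, mem_univ a⟩
      rw [← h] at this
      exact (Finset.mem_erase.mp this).1 rfl
    · intro S hS
      rw [mem_powersetCard] at hS
      have hne : ¬ (univ : Finset (Fin n)) ⊆ S := by
        intro h
        have := Finset.card_le_card h
        omega
      obtain ⟨i, _, hiS⟩ := Finset.not_subset.mp hne
      refine ⟨i, mem_univ i, ?_⟩
      symm
      apply Finset.eq_of_subset_of_card_le
      · intro x hx
        exact Finset.mem_erase.mpr ⟨fun h => hiS (h ▸ hx), mem_univ x⟩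
      · rw [Finset.card_erase_of_mem (mem_univ i), hcardu, hS.2]
    · intro a _
      rfl
  have hkey : ∀ i j : Fin n, i ≠ j →
      P i * P j = (∏ k, f k) * ∏ k ∈ (univ.erase i).erase j, f k := by
    intro i j hij
    have h1 : ∏ k ∈ univ.erase i, f k = f j * ∏ k ∈ (univ.erase i).erase j, f k :=
      (Finset.mul_prod_erase _ _ (Finset.mem_erase.mpr ⟨hij.symm, mem_univ j⟩)).symm
    have h3 : ∏ k ∈ univ.erase j, f k = f i * ∏ k ∈ (univ.erase i).erase j, f k := by
      rw [show (univ.erase i).erase j = (univ.erase j).erase i from Finset.erase_right_comm]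
      exact (Finset.mul_prod_erase _ _ (Finset.mem_erase.mpr ⟨hij, mem_univ i⟩)).symm
    have h4 : ∏ k, f k = f i * ∏ k ∈ univ.erase i, f k :=
      (Finset.mul_prod_erase _ _ (mem_univ i)).symm
    show (∏ k ∈ univ.erase i, f k) * (∏ k ∈ univ.erase j, f k) = _
    rw [h3, h4, h1]
    ring
  have hsq : (∑ i, P i)^2 = ∑ i, P i ^2 + ∑ p ∈ univ.offDiag, P p.1 * P p.2 := by
    rw [sq, Finset.sum_mul_sum, ← Finset.sum_product']
    rw [show (univ ×ˢ univ : Finset (Fin n × Fin n)) = univ.diag ∪ univ.offDiag from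
      (Finset.diag_union_offDiag _).symm]
    rw [Finset.sum_union (Finset.disjoint_diag_offDiag _)]
    congr 1
    rw [Finset.sum_diag]
    simp [sq]
  have hmaps : ∀ p ∈ (univ : Finset (Fin n)).offDiag,
      (univ.erase p.1).erase p.2 ∈ powersetCard (n-2) univ := by
    intro p hp
    rw [Finset.mem_offDiag] at hp
    rw [mem_powersetCard]
    refine ⟨Finset.subset_univ _, ?_⟩
    rw [Finset.card_erase_of_mem (Finset.mem_erase.mpr ⟨hp.2.2.symm, mem_univ _⟩),
      Finset.card_erase_of_mem (mem_univ _), hcardu]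
    omega
  have hfiber : ∑ p ∈ univ.offDiag, ∏ k ∈ (univ.erase p.1).erase p.2, f k
      = 2 * ∑ S ∈ powersetCard (n-2) univ, ∏ k ∈ S, f k := by
    rw [← Finset.sum_fiberwise_of_maps_to hmaps (fun p => ∏ k ∈ (univ.erase p.1).erase p.2, f k)]
    rw [Finset.mul_sum]
    apply Finset.sum_congr rfl
    intro S hS
    have hinner : ∀ p ∈ univ.offDiag.filter
        (fun p : Fin n × Fin n => (univ.erase p.1).erase p.2 = S),
        (∏ k ∈ (univ.erase p.1).erase p.2, f k) = ∏ k ∈ S, f k := by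
      intro p hp
      rw [(Finset.mem_filter.mp hp).2]
    rw [Finset.sum_congr rfl hinner, Finset.sum_const]
    rw [mem_powersetCard] at hS
    have hT : (Finset.univ \ S).card = 2 := by
      rw [Finset.card_sdiff_of_subset hS.1, hcardu, hS.2]
      omega
    obtain ⟨a, b, hab, hTe⟩ := Finset.card_eq_two.mp hT
    rw [pair_filter_card a b hab S hTe]
    rw [show ({(a,b),(b,a)} : Finset (Fin n × Fin n)).card = 2 from by
      rw [Finset.card_insert_of_notMem (by
        simp only [Finset.mem_singleton, Prod.mk.injEq, not_and]
        intro h _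
        exact hab h), Finset.card_singleton]]
    simp [two_smul, two_mul]
  have hoff : ∑ p ∈ univ.offDiag, P p.1 * P p.2
      = 2 * (∑ S ∈ powersetCard (n-2) univ, ∏ k ∈ S, f k) * (∏ k, f k) := by
    have : ∀ p ∈ (univ : Finset (Fin n)).offDiag,
        P p.1 * P p.2 = (∏ k, f k) * ∏ k ∈ (univ.erase p.1).erase p.2, f k := by
      intro p hp
      exact hkey p.1 p.2 (Finset.mem_offDiag.mp hp).2.2
    rw [Finset.sum_congr rfl this, ← Finset.mul_sum, hfiber]
    ring
  have hCS : (∑ i, P i)^2 ≤ (n : ℝ) * ∑ i, P i^2 := by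
    have := sq_sum_le_card_mul_sum_sq (s := (univ : Finset (Fin n))) (f := P)
    simpa [hcardu] using this
  rw [hEn, hE1]
  nlinarith [hsq, hoff, hCS]


lemma exists_fin (s : Multiset ℝ) :
    ∃ f : Fin (Multiset.card s) → ℝ, s = Multiset.map f Finset.univ.val := by
  induction s using Quotient.inductionOn with
  | h l =>
    refine ⟨l.get, ?_⟩
    show (l : Multiset ℝ) = Multiset.map l.get (Finset.univ : Finset (Fin l.length)).val
    rw [Fin.univ_val_map, List.ofFn_get]

lemma chooseB (N m : ℕ) (h1 : 1 ≤ N) :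
    (N - m) * N.choose m = N * (N-1).choose m := by
  obtain ⟨M, rfl⟩ : ∃ M, N = M + 1 := ⟨N - 1, by omega⟩
  by_cases hm : m ≤ M
  · have h2 := Nat.add_one_mul_choose_eq M m
    have h3 := Nat.choose_succ_right_eq (M+1) m
    simp only [Nat.succ_eq_add_one, Nat.add_sub_cancel] at h2 ⊢
    rw [Nat.mul_comm, ← h3, ← h2]
  · have h4 : M + 1 - m = 0 ∨ (M+1).choose m = 0 := by
      by_cases h : m ≤ M + 1
      · left; omega
      · right; exact Nat.choose_eq_zero_of_lt (by omega)
    have h5 : M.choose m = 0 := Nat.choose_eq_zero_of_lt (by omega)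
    simp only [Nat.add_sub_cancel, h5, Nat.mul_zero]
    rcases h4 with h | h <;> simp [h]

theorem newton_aux : ∀ (n : ℕ) (s : Multiset ℝ), Multiset.card s = n → ∀ (k : ℕ), 1 ≤ k →
    ((Multiset.card s).choose k : ℝ)^2 * (s.esymm (k-1) * s.esymm (k+1))
      ≤ (((Multiset.card s).choose (k-1) : ℝ) * ((Multiset.card s).choose (k+1))) * (s.esymm k)^2 := by
  intro n
  induction n with
  | zero =>
    intro s hcard k hk
    rw [esymm_of_card_lt (show Multiset.card s < k + 1 by omega)]
    have : (0:ℝ) ≤ (((Multiset.card s).choose (k-1) : ℝ) * ((Multiset.card s).choose (k+1))) * (s.esymm k)^2 := by positivity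
    linarith [this]
  | succ n ih =>
    intro s hcard k hk
    by_cases hbig : n + 1 < k + 1
    · rw [esymm_of_card_lt (show Multiset.card s < k + 1 by omega)]
      have : (0:ℝ) ≤ (((Multiset.card s).choose (k-1) : ℝ) * ((Multiset.card s).choose (k+1))) * (s.esymm k)^2 := by positivity
      linarith [this]
    push_neg at hbig
    by_cases heq : k + 1 = n + 1
    · -- base case: k = n, card s = k + 1
      obtain ⟨f, hf⟩ := exists_fin s
      have hN2 : 2 ≤ Multiset.card s := by omega
      have hesymm : ∀ m : ℕ, s.esymm m
          = ∑ u ∈ powersetCard m (univ : Finset (Fin (Multiset.card s))), ∏ i ∈ u, f i := by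
        intro m
        conv_lhs => rw [hf]
        exact Finset.esymm_map_val f univ m
      have hNT := newton_top (Multiset.card s) hN2 f
      rw [← hesymm, ← hesymm, ← hesymm] at hNT
      have hcs : Multiset.card s = k + 1 := by omega
      rw [hcs] at hNT ⊢
      rw [show k + 1 - 2 = k - 1 from by omega, show k + 1 - 1 = k from by omega] at hNT
      have hc1 : (k+1).choose k = k + 1 := by
        have h := Nat.choose_symm (show 1 ≤ k + 1 by omega)
        simpa using h
      have hc3 : (k+1).choose (k+1) = 1 := Nat.choose_self _
      have hc2 : 2 * ((k+1).choose (k - 1) : ℝ) = ((k:ℝ)+1) * (k:ℝ) := by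
        have h7 : (k+1).choose (k-1) = (k+1).choose 2 := by
          rw [show k - 1 = k + 1 - 2 from by omega, Nat.choose_symm (by omega)]
        have h8 := Nat.choose_succ_right_eq (k+1) 1
        rw [Nat.choose_one_right] at h8
        simp only [Nat.add_sub_cancel] at h8
        rw [h7]
        have h8' : (k+1).choose 2 * 2 = (k+1)*k := by simpa using h8
        have h9 : ((k+1).choose 2 : ℝ) * 2 = ((k:ℝ)+1) * (k:ℝ) := by exact_mod_cast h8'
        linarith [h9]
      rw [hc1, hc3]
      have h10 := mul_le_mul_of_nonneg_left hNT (show (0:ℝ) ≤ ((k:ℝ)+1)/2 by positivity)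
      push_cast at h10 ⊢
      nlinarith [h10, hc2]
    · -- inductive step: k + 1 < n + 1
      obtain ⟨t, hct, hA⟩ := deriv_multiset s (by omega)
      rw [hcard] at hct hA
      simp only [Nat.add_sub_cancel] at hct hA
      have IH := ih t hct k hk
      rw [hct] at IH
      set N := n + 1 with hNdef
      have hkn : k + 1 ≤ n := by omega
      -- real versions
      have hA1 := hA (k-1) (by omega)
      have hA2 := hA k (by omega)
      have hA3 := hA (k+1) (by omega)
      have hB1 : ((N - (k-1) : ℕ) : ℝ) * (N.choose (k-1) : ℝ) = (N:ℝ) * (n.choose (k-1) : ℝ) := by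
        have := chooseB N (k-1) (by omega)
        have h11 : N - 1 = n := by omega
        rw [h11] at this
        exact_mod_cast congrArg (Nat.cast : ℕ → ℝ) this
      have hB2 : ((N - k : ℕ) : ℝ) * (N.choose k : ℝ) = (N:ℝ) * (n.choose k : ℝ) := by
        have := chooseB N k (by omega)
        have h11 : N - 1 = n := by omega
        rw [h11] at this
        exact_mod_cast congrArg (Nat.cast : ℕ → ℝ) this
      have hB3 : ((N - (k+1) : ℕ) : ℝ) * (N.choose (k+1) : ℝ) = (N:ℝ) * (n.choose (k+1) : ℝ) := by
        have := chooseB N (k+1) (by omega)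
        have h11 : N - 1 = n := by omega
        rw [h11] at this
        exact_mod_cast congrArg (Nat.cast : ℕ → ℝ) this
      have h6 := mul_le_mul_of_nonneg_left IH (show (0:ℝ) ≤ (N:ℝ)^4 by positivity)
      have e1 : (N:ℝ)^4 * ((n.choose k : ℝ)^2 * (t.esymm (k-1) * t.esymm (k+1)))
          = (((N - k : ℕ):ℝ)^2 * ((N - (k-1) : ℕ):ℝ) * ((N - (k+1) : ℕ):ℝ))
            * ((N.choose k : ℝ)^2 * (s.esymm (k-1) * s.esymm (k+1))) := by
        linear_combination
          (-((N:ℝ) * (n.choose k : ℝ) + ((N - k : ℕ):ℝ) * (N.choose k : ℝ)) * ((N:ℝ) * t.esymm (k-1)) * ((N:ℝ) * t.esymm (k+1))) * hB2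
          - ((((N - k : ℕ):ℝ) * (N.choose k : ℝ))^2 * ((N:ℝ) * t.esymm (k+1))) * hA1
          - ((((N - k : ℕ):ℝ) * (N.choose k : ℝ))^2 * (((N - (k-1) : ℕ):ℝ) * s.esymm (k-1))) * hA3
      have e2 : (N:ℝ)^4 * (((n.choose (k-1) : ℝ) * (n.choose (k+1) : ℝ)) * (t.esymm k)^2)
          = (((N - k : ℕ):ℝ)^2 * ((N - (k-1) : ℕ):ℝ) * ((N - (k+1) : ℕ):ℝ))
            * (((N.choose (k-1) : ℝ) * (N.choose (k+1) : ℝ)) * (s.esymm k)^2) := by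
        linear_combination
          (-((N:ℝ) * t.esymm k + ((N - k : ℕ):ℝ) * s.esymm k) * ((N:ℝ) * (n.choose (k-1):ℝ)) * ((N:ℝ) * (n.choose (k+1):ℝ))) * hA2
          - ((((N - k : ℕ):ℝ) * s.esymm k)^2 * ((N:ℝ) * (n.choose (k+1):ℝ))) * hB1
          - ((((N - k : ℕ):ℝ) * s.esymm k)^2 * (((N - (k-1) : ℕ):ℝ) * (N.choose (k-1):ℝ))) * hB3
      rw [e1, e2] at h6
      rw [hcard]
      have hpos : (0:ℝ) < ((N - k : ℕ):ℝ)^2 * ((N - (k-1) : ℕ):ℝ) * ((N - (k+1) : ℕ):ℝ) := by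
        have p1 : 0 < N - k := by omega
        have p2 : 0 < N - (k-1) := by omega
        have p3 : 0 < N - (k+1) := by omega
        have q1 : (0:ℝ) < ((N - k : ℕ):ℝ) := by exact_mod_cast p1
        have q2 : (0:ℝ) < ((N - (k-1) : ℕ):ℝ) := by exact_mod_cast p2
        have q3 : (0:ℝ) < ((N - (k+1) : ℕ):ℝ) := by exact_mod_cast p3
        positivity
      exact le_of_mul_le_mul_left h6 hpos


theorem newton (s : Multiset ℝ) (k : ℕ) (hk : 1 ≤ k) :
    ((Multiset.card s).choose k : ℝ)^2 * (s.esymm (k-1) * s.esymm (k+1))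
      ≤ (((Multiset.card s).choose (k-1) : ℝ) * ((Multiset.card s).choose (k+1))) * (s.esymm k)^2 :=
  newton_aux (Multiset.card s) s rfl k hk

lemma chain (t : Multiset ℝ) (K : ℕ) (hK : K ≤ Multiset.card t)
    (hpos : ∀ j, j ≤ K → 0 < t.esymm j) :
    ∀ k l : ℕ, 1 ≤ l → l ≤ k → k ≤ K →
      ((Multiset.card t).choose (k-1) : ℝ) * ((Multiset.card t).choose l)
        * (t.esymm k * t.esymm (l-1))
      ≤ ((Multiset.card t).choose k : ℝ) * ((Multiset.card t).choose (l-1))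
        * (t.esymm (k-1) * t.esymm l) := by
  intro k
  induction k with
  | zero => intro l hl hlk _; omega
  | succ k ihk =>
    intro l hl hlk hkK
    rcases Nat.lt_or_ge l (k+1) with hlt | hge
    · have hk1 : 1 ≤ k := by omega
      have hIH := ihk l hl (by omega) (by omega)
      have hNT := newton t k hk1
      simp only [Nat.add_sub_cancel] at *
      set m := Multiset.card t
      -- positivity facts
      have pe0 : 0 < t.esymm (l-1) := hpos _ (by omega)
      have pe1 : 0 < t.esymm k := hpos _ (by omega)
      have pe2 : 0 < t.esymm (k-1) := hpos _ (by omega)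
      have pc1 : 0 < (m.choose k : ℝ) := by
        exact_mod_cast Nat.choose_pos (show k ≤ m by omega)
      have pc2 : (0:ℝ) ≤ (m.choose (k+1) : ℝ) := by positivity
      have pc3 : (0:ℝ) ≤ (m.choose l : ℝ) := by positivity
      have pc4 : (0:ℝ) ≤ (m.choose (l-1) : ℝ) := by positivity
      have h1 := mul_le_mul_of_nonneg_right hNT
        (show (0:ℝ) ≤ (m.choose l : ℝ) * t.esymm (l-1) by positivity)
      have h2 := mul_le_mul_of_nonneg_right hIH
        (show (0:ℝ) ≤ (m.choose (k+1) : ℝ) * t.esymm k by positivity)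
      refine le_of_mul_le_mul_left ?_ (show (0:ℝ) < (m.choose k : ℝ) * t.esymm (k-1) by positivity)
      nlinarith [h1, h2]
    · have hlk1 : l = k+1 := by omega
      subst hlk1
      simp only [Nat.add_sub_cancel]
      apply le_of_eq
      ring


end NewtonAux

open NewtonAux

set_option maxHeartbeats 1000000 in
/-- Inequality (2.9): if 0 ≤ l < k ≤ n, λ ∈ Γ_k and λ₁ < 0, then
σ_{k−1}(λ|1)σ_l(λ) − σ_k(λ)σ_{l−1}(λ|1) ≥ (n/k)·((k−l)/(n−l))·σ_{k−1}(λ)σ_l(λ). -/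
theorem deriv_quotient_first_ge_sigma (n k l : ℕ) (hlk : l < k) (hkn : k ≤ n)
    (lam : Fin n → ℝ) (hlam : lam ∈ GardingCone n k)
    (hneg : lam ⟨0, by omega⟩ < 0) :
    esymmDel lam ⟨0, by omega⟩ ((k : ℤ) - 1) * esymm lam (l : ℤ)
      - esymm lam (k : ℤ) * esymmDel lam ⟨0, by omega⟩ ((l : ℤ) - 1)
    ≥ ((n : ℝ) / k) * (((k : ℝ) - l) / ((n : ℝ) - l)) *
        (esymm lam ((k : ℤ) - 1) * esymm lam (l : ℤ)) := by
  classical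
  have hk1 : 1 ≤ k := by omega
  have hn1 : 1 ≤ n := by omega
  set i : Fin n := ⟨0, by omega⟩ with hi
  set M : Multiset ℝ := (Finset.univ : Finset (Fin n)).val.map lam with hM
  set μ : Multiset ℝ := ((Finset.univ : Finset (Fin n)).erase i).val.map lam with hμ
  have hcardM : Multiset.card M = n := by
    rw [hM, Multiset.card_map]
    simp
  have hcardμ : Multiset.card μ = n - 1 := by
    rw [hμ, Multiset.card_map, ← Finset.card_def, Finset.card_erase_of_mem (mem_univ i)]
    simp
  have hesymmM : ∀ m : ℕ, esymm lam (m : ℤ) = M.esymm m := by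
    intro m
    rw [esymm, if_neg (by omega), Int.toNat_natCast]
    exact (Finset.esymm_map_val lam Finset.univ m).symm
  have hesymmDel : ∀ m : ℕ, esymmDel lam i (m : ℤ) = μ.esymm m := by
    intro m
    rw [esymmDel, if_neg (by omega), Int.toNat_natCast]
    exact (Finset.esymm_map_val lam (Finset.univ.erase i) m).symm
  -- recurrence
  have hcons : M = lam i ::ₘ μ := by
    have hval : (Finset.univ : Finset (Fin n)).val = i ::ₘ (Finset.univ.erase i).val := by
      rw [Finset.erase_val]
      exact (Multiset.cons_erase (show i ∈ (Finset.univ : Finset (Fin n)).val by simp)).symm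
    rw [hM, hval, Multiset.map_cons]
  have hrec : ∀ m : ℕ, M.esymm (m+1) = μ.esymm (m+1) + lam i * μ.esymm m := by
    intro m
    rw [hcons]
    exact esymm_cons _ _ _
  have hGam : ∀ m : ℕ, 1 ≤ m → m ≤ k → 0 < M.esymm m := by
    intro m h1 h2
    rw [← hesymmM]
    exact hlam m h1 h2
  have hMpos : ∀ m : ℕ, m ≤ k → 0 < M.esymm m := by
    intro m hm
    rcases Nat.eq_zero_or_pos m with rfl | hm1
    · rw [esymm_zero']; norm_num
    · exact hGam m hm1 hm
  have hposμ : ∀ j : ℕ, j ≤ k → j ≤ n - 1 → 0 < μ.esymm j := by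
    intro j
    induction j with
    | zero => intro _ _; rw [esymm_zero']; norm_num
    | succ j ihj =>
      intro h1 h2
      have hμj : 0 < μ.esymm j := ihj (by omega) (by omega)
      have hMj : 0 < M.esymm (j+1) := hGam (j+1) (by omega) h1
      have := hrec j
      nlinarith [mul_pos (neg_pos.mpr hneg) hμj]
  have hle : ∀ m : ℕ, m ≤ k → m ≤ n - 1 → M.esymm m ≤ μ.esymm m := by
    intro m hm1 hm2
    rcases Nat.eq_zero_or_pos m with rfl | hm0
    · rw [esymm_zero', esymm_zero']
    · obtain ⟨m', rfl⟩ : ∃ m', m = m' + 1 := ⟨m - 1, by omega⟩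
      have := hrec m'
      have hμm' : 0 < μ.esymm m' := hposμ m' (by omega) (by omega)
      nlinarith [mul_pos (neg_pos.mpr hneg) hμm']
  obtain ⟨k', rfl⟩ : ∃ k', k = k' + 1 := ⟨k - 1, by omega⟩
  have hidx1 : ((k' + 1 : ℕ) : ℤ) - 1 = ((k' : ℕ) : ℤ) := by push_cast; ring
  rcases Nat.eq_zero_or_pos l with rfl | hl1
  · -- case l = 0
    rw [hidx1, hesymmDel, hesymmM, hesymmM, hesymmM]
    rw [show ((0 : ℕ) : ℤ) - 1 = (-1 : ℤ) by norm_num]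
    rw [show esymmDel lam i (-1 : ℤ) = 0 by rw [esymmDel, if_pos (by norm_num)]]
    rw [esymm_zero', mul_one, mul_zero, sub_zero, mul_one]
    have hkey : M.esymm k' ≤ μ.esymm k' := hle k' (by omega) (by omega)
    have hco : ((n:ℝ) / ((k'+1 : ℕ):ℝ) * ((((k'+1:ℕ):ℝ) - ((0:ℕ):ℝ)) / ((n:ℝ) - ((0:ℕ):ℝ))) : ℝ) = 1 := by
      push_cast
      have hk0 : ((k':ℝ) + 1) ≠ 0 := by positivity
      have hn0 : (n:ℝ) ≠ 0 := by positivity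
      field_simp
      ring
    rw [hco, one_mul]
    exact hkey
  · -- case l ≥ 1
    obtain ⟨l', rfl⟩ : ∃ l', l = l' + 1 := ⟨l - 1, by omega⟩
    have hidx2 : ((l' + 1 : ℕ) : ℤ) - 1 = ((l' : ℕ) : ℤ) := by push_cast; ring
    rw [hidx1, hidx2, hesymmDel, hesymmDel, hesymmM, hesymmM, hesymmM]
    set μ0 := μ.esymm l' with hμ0
    set μ1 := μ.esymm k' with hμ1
    set μ2 := μ.esymm (l'+1) with hμ2
    set μ3 := μ.esymm (k'+1) with hμ3
    have hMl : M.esymm (l'+1) = μ2 + lam i * μ0 := hrec l'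
    have hMk : M.esymm (k'+1) = μ3 + lam i * μ1 := hrec k'
    have hident : μ1 * M.esymm (l'+1) - M.esymm (k'+1) * μ0 = μ1 * μ2 - μ3 * μ0 := by
      rw [hMl, hMk]; ring
    -- positivity of μ's
    have pμ0 : 0 < μ0 := hposμ l' (by omega) (by omega)
    have pμ1 : 0 < μ1 := hposμ k' (by omega) (by omega)
    have pμ2 : 0 < μ2 := hposμ (l'+1) (by omega) (by omega)
    -- KEY inequality
    have hKEY : ((k'+1 : ℕ):ℝ) * ((n:ℝ) - ((l'+1 : ℕ):ℝ)) * (μ3 * μ0)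
        ≤ ((l'+1 : ℕ):ℝ) * ((n:ℝ) - ((k'+1 : ℕ):ℝ)) * (μ1 * μ2) := by
      rcases Nat.lt_or_ge (k'+1) n with hklt | hkge
      · -- k ≤ n - 1 : use chain
        have hchain := chain μ (k'+1) (by omega) (fun j hj => hposμ j hj (by omega))
          (k'+1) (l'+1) (by omega) (by omega) (le_refl _)
        simp only [Nat.add_sub_cancel] at hchain
        rw [hcardμ] at hchain
        set m := n - 1 with hm
        have hI1 : ((k'+1:ℕ):ℝ) * (m.choose (k'+1) : ℝ) = ((m - k' : ℕ):ℝ) * (m.choose k' : ℝ) := by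
          have h12 := Nat.choose_succ_right_eq m k'
          exact_mod_cast congrArg (Nat.cast : ℕ → ℝ)
            (by rw [Nat.mul_comm, h12, Nat.mul_comm] : (k'+1) * m.choose (k'+1) = (m - k') * m.choose k')
        have hI2 : ((l'+1:ℕ):ℝ) * (m.choose (l'+1) : ℝ) = ((m - l' : ℕ):ℝ) * (m.choose l' : ℝ) := by
          have h12 := Nat.choose_succ_right_eq m l'
          exact_mod_cast congrArg (Nat.cast : ℕ → ℝ)
            (by rw [Nat.mul_comm, h12, Nat.mul_comm] : (l'+1) * m.choose (l'+1) = (m - l') * m.choose l')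
        have hcast1 : ((m - k' : ℕ):ℝ) = (n:ℝ) - ((k'+1 : ℕ):ℝ) := by
          have h1 : m - k' = n - (k'+1) := by omega
          rw [h1, Nat.cast_sub (by omega)]
        have hcast2 : ((m - l' : ℕ):ℝ) = (n:ℝ) - ((l'+1 : ℕ):ℝ) := by
          have h1 : m - l' = n - (l'+1) := by omega
          rw [h1, Nat.cast_sub (by omega)]
        have pc1 : 0 < (m.choose k' : ℝ) := by
          exact_mod_cast Nat.choose_pos (show k' ≤ m by omega)
        have pc3 : 0 < (m.choose l' : ℝ) := by
          exact_mod_cast Nat.choose_pos (show l' ≤ m by omega)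
        have h' := mul_le_mul_of_nonneg_left hchain
          (show (0:ℝ) ≤ ((k'+1:ℕ):ℝ) * ((l'+1:ℕ):ℝ) by positivity)
        have e1 : ((k'+1:ℕ):ℝ) * ((l'+1:ℕ):ℝ) * ((m.choose k' : ℝ) * (m.choose (l'+1):ℝ) * (μ3 * μ0))
            = ((m.choose k' : ℝ) * (m.choose l' : ℝ)) * (((k'+1:ℕ):ℝ) * ((n:ℝ) - ((l'+1 : ℕ):ℝ)) * (μ3 * μ0)) := by
          rw [← hcast2]
          linear_combination (((k'+1:ℕ):ℝ) * (m.choose k' : ℝ) * μ3 * μ0) * hI2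
        have e2 : ((k'+1:ℕ):ℝ) * ((l'+1:ℕ):ℝ) * ((m.choose (k'+1) : ℝ) * (m.choose l' : ℝ) * (μ1 * μ2))
            = ((m.choose k' : ℝ) * (m.choose l' : ℝ)) * (((l'+1:ℕ):ℝ) * ((n:ℝ) - ((k'+1 : ℕ):ℝ)) * (μ1 * μ2)) := by
          rw [← hcast1]
          linear_combination (((l'+1:ℕ):ℝ) * (m.choose l' : ℝ) * μ1 * μ2) * hI1
        rw [e1, e2] at h'
        exact le_of_mul_le_mul_left h' (by positivity)
      · -- k = n
        have hkn' : k' + 1 = n := by omega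
        have hμ3z : μ3 = 0 := by
          rw [hμ3]
          exact esymm_of_card_lt (by omega)
        have hcast : ((k'+1 : ℕ):ℝ) = (n:ℝ) := by exact_mod_cast congrArg (Nat.cast : ℕ → ℝ) hkn'
        have hz1 : ((k'+1 : ℕ):ℝ) * ((n:ℝ) - ((l'+1:ℕ):ℝ)) * (μ3 * μ0) = 0 := by
          rw [hμ3z]; ring
        have hz2 : ((l'+1 : ℕ):ℝ) * ((n:ℝ) - ((k'+1:ℕ):ℝ)) * (μ1 * μ2) = 0 := by
          rw [hcast]; ring
        rw [hz1, hz2]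
    -- assemble
    have hnl : (0:ℝ) < (n:ℝ) - ((l'+1:ℕ):ℝ) := by
      have h : l' + 1 < n := by omega
      have h2 : ((l'+1:ℕ):ℝ) < (n:ℝ) := by exact_mod_cast h
      linarith
    have hkl : (0:ℝ) < ((k'+1:ℕ):ℝ) - ((l'+1:ℕ):ℝ) := by
      have h : l' + 1 < k' + 1 := by omega
      have h2 : ((l'+1:ℕ):ℝ) < ((k'+1:ℕ):ℝ) := by exact_mod_cast h
      linarith
    have hkp : (0:ℝ) < ((k'+1:ℕ):ℝ) := by positivity
    have hc : (0:ℝ) < (n:ℝ)/((k'+1:ℕ):ℝ) * ((((k'+1:ℕ):ℝ) - ((l'+1:ℕ):ℝ)) / ((n:ℝ) - ((l'+1:ℕ):ℝ))) := by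
      have hn0 : (0:ℝ) < (n:ℝ) := by positivity
      positivity
    have step1 : M.esymm k' * M.esymm (l'+1) ≤ μ1 * μ2 :=
      mul_le_mul (hle k' (by omega) (by omega)) (hle (l'+1) (by omega) (by omega))
        (le_of_lt (hMpos (l'+1) (by omega))) (le_of_lt pμ1)
    have hck : ((k'+1:ℕ):ℝ) * ((n:ℝ) - ((l'+1:ℕ):ℝ))
        * ((n:ℝ)/((k'+1:ℕ):ℝ) * ((((k'+1:ℕ):ℝ) - ((l'+1:ℕ):ℝ)) / ((n:ℝ) - ((l'+1:ℕ):ℝ))))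
        = (n:ℝ) * (((k'+1:ℕ):ℝ) - ((l'+1:ℕ):ℝ)) := by
      have ha : ((k'+1:ℕ):ℝ) ≠ 0 := ne_of_gt hkp
      have hb : (n:ℝ) - ((l'+1:ℕ):ℝ) ≠ 0 := ne_of_gt hnl
      rw [div_mul_div_comm,
        mul_comm (((k'+1:ℕ):ℝ) * ((n:ℝ) - ((l'+1:ℕ):ℝ))) _,
        div_mul_cancel₀ _ (mul_ne_zero ha hb)]
    have step2 : (n:ℝ)/((k'+1:ℕ):ℝ) * ((((k'+1:ℕ):ℝ) - ((l'+1:ℕ):ℝ)) / ((n:ℝ) - ((l'+1:ℕ):ℝ)))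
        * (μ1 * μ2) ≤ μ1 * μ2 - μ3 * μ0 := by
      have hpos2 : (0:ℝ) < ((k'+1:ℕ):ℝ) * ((n:ℝ) - ((l'+1:ℕ):ℝ)) := by positivity
      refine le_of_mul_le_mul_left ?_ hpos2
      have e3 : ((k'+1:ℕ):ℝ) * ((n:ℝ) - ((l'+1:ℕ):ℝ))
          * ((n:ℝ)/((k'+1:ℕ):ℝ) * ((((k'+1:ℕ):ℝ) - ((l'+1:ℕ):ℝ)) / ((n:ℝ) - ((l'+1:ℕ):ℝ))) * (μ1 * μ2))
          = (n:ℝ) * (((k'+1:ℕ):ℝ) - ((l'+1:ℕ):ℝ)) * (μ1 * μ2) := by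
        linear_combination (μ1 * μ2) * hck
      rw [e3]
      nlinarith [hKEY]
    rw [ge_iff_le, hident]
    calc (n:ℝ)/((k'+1:ℕ):ℝ) * ((((k'+1:ℕ):ℝ) - ((l'+1:ℕ):ℝ)) / ((n:ℝ) - ((l'+1:ℕ):ℝ)))
          * (M.esymm k' * M.esymm (l'+1))
        ≤ (n:ℝ)/((k'+1:ℕ):ℝ) * ((((k'+1:ℕ):ℝ) - ((l'+1:ℕ):ℝ)) / ((n:ℝ) - ((l'+1:ℕ):ℝ))) * (μ1 * μ2) :=
          mul_le_mul_of_nonneg_left step1 (le_of_lt hc)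
      _ ≤ μ1 * μ2 - μ3 * μ0 := step2
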